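/- Let n ≥ 1, let f : [0,1]^n → ℝ be continuous, and let s₀ ∈ (0,1). Then lim_{ε→0⁺} ∫_{Δ_n} (1/(√π·ε))^n · f(s) · Π_{i=1}^{n} exp( −(s_i − s₀)²/ε² ) ds = (1/n!) · f(s₀, s₀, …, s₀), where Δ_n = { s ∈ [0,1]^n : s₁ ≤ s₂ ≤ … ≤ s_n } is the ordered simplex and ds is Lebesgue measure. -/

import Mathlib

open MeasureTheory Filter

namespace OGAI

variable {n : ℕ}

noncomputable def Phi (u : Fin n → ℝ) : ℝ := ∏ i, Real.exp (-(u i) ^ 2)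

lemma Phi_cont : Continuous (Phi (n := n)) := by
  unfold Phi; fun_prop

lemma Phi_nonneg (u : Fin n → ℝ) : 0 ≤ Phi u :=
  Finset.prod_nonneg fun i _ => (Real.exp_pos _).le

lemma Phi_integrable : Integrable (Phi (n := n)) := by
  have : ∀ i : Fin n, Integrable (fun x : ℝ => Real.exp (-(x) ^ 2)) := by
    intro i
    simpa using integrable_exp_neg_mul_sq (b := 1) one_pos
  exact Integrable.fintype_prod (f := fun (_ : Fin n) (x : ℝ) => Real.exp (-(x) ^ 2)) this

lemma Phi_integral : ∫ u : Fin n → ℝ, Phi u = (Real.sqrt Real.pi) ^ n := by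
  have h1 : ∫ x : ℝ, Real.exp (-(x) ^ 2) = Real.sqrt Real.pi := by
    simpa using integral_gaussian 1
  rw [show (fun u : Fin n → ℝ => Phi u) = fun u : Fin n → ℝ =>
      ∏ i, (fun x : ℝ => Real.exp (-(x) ^ 2)) (u i) from rfl, volume_pi,
    MeasureTheory.integral_fintype_prod_eq_pow (ι := Fin n) (fun x : ℝ => Real.exp (-(x) ^ 2)), h1,
    Fintype.card_fin]

lemma Phi_symm (σ : Equiv.Perm (Fin n)) (u : Fin n → ℝ) : Phi (u ∘ σ) = Phi u := by
  unfold Phi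
  exact Equiv.prod_comp σ (fun i => Real.exp (-(u i) ^ 2))

lemma mp_perm (σ : Equiv.Perm (Fin n)) :
    MeasurePreserving (⇑(MeasurableEquiv.piCongrLeft (fun _ : Fin n => ℝ) σ.symm))
      volume volume :=
  volume_measurePreserving_piCongrLeft (fun _ : Fin n => ℝ) σ.symm

lemma perm_apply (σ : Equiv.Perm (Fin n)) (u : Fin n → ℝ) :
    (MeasurableEquiv.piCongrLeft (fun _ : Fin n => ℝ) σ.symm) u = u ∘ σ := by
  funext j
  rw [MeasurableEquiv.coe_piCongrLeft]
  have := Equiv.piCongrLeft_apply_apply (fun _ : Fin n => ℝ) σ.symm u (σ j)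
  simpa using this

lemma null_noninj : volume {u : Fin n → ℝ | ¬ Function.Injective u} = 0 := by
  have hsub : {u : Fin n → ℝ | ¬ Function.Injective u}
      ⊆ ⋃ (i : Fin n) (j : Fin n) (_ : i ≠ j), {u : Fin n → ℝ | u i = u j} := by
    intro u hu
    simp only [Set.mem_setOf_eq, Function.Injective, not_forall] at hu
    obtain ⟨i, j, hij, hne⟩ := hu
    exact Set.mem_iUnion.2 ⟨i, Set.mem_iUnion.2 ⟨j, Set.mem_iUnion.2 ⟨hne, hij⟩⟩⟩
  refine measure_mono_null hsub ?_
  refine measure_iUnion_null fun i => measure_iUnion_null fun j => measure_iUnion_null fun hij => ?_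
  have hset : {u : Fin n → ℝ | u i = u j} =
      (LinearMap.ker ((LinearMap.proj i : (Fin n → ℝ) →ₗ[ℝ] ℝ) - LinearMap.proj j) :
        Submodule ℝ (Fin n → ℝ)) := by
    ext u
    simp [LinearMap.mem_ker, sub_eq_zero]
  rw [hset]
  apply Measure.addHaar_submodule
  intro htop
  have hmem : (Pi.single i (1 : ℝ)) ∈
      LinearMap.ker ((LinearMap.proj i : (Fin n → ℝ) →ₗ[ℝ] ℝ) - LinearMap.proj j) := by
    rw [htop]; trivial
  rw [LinearMap.mem_ker, LinearMap.sub_apply, LinearMap.proj_apply, LinearMap.proj_apply,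
    Pi.single_eq_same, Pi.single_eq_of_ne (Ne.symm hij), sub_zero] at hmem
  exact one_ne_zero hmem

lemma isClosed_mono : IsClosed {u : Fin n → ℝ | Monotone u} := by
  have hset : {u : Fin n → ℝ | Monotone u} =
      ⋂ (i : Fin n) (j : Fin n) (_ : i ≤ j), {u : Fin n → ℝ | u i ≤ u j} := by
    ext u
    simp only [Set.mem_setOf_eq, Set.mem_iInter]
    exact ⟨fun h i j hij => h hij, fun h a b hab => h a b hab⟩
  rw [hset]
  exact isClosed_iInter fun i => isClosed_iInter fun j => isClosed_iInter fun _ =>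
    isClosed_le (continuous_apply i) (continuous_apply j)

lemma integral_monotone_eq (φ : (Fin n → ℝ) → ℝ) (hint : Integrable φ)
    (hsymm : ∀ (σ : Equiv.Perm (Fin n)) (u : Fin n → ℝ), φ (u ∘ σ) = φ u) :
    (n.factorial : ℝ) * ∫ u in {u : Fin n → ℝ | Monotone u}, φ u = ∫ u, φ u := by
  classical
  set A : Equiv.Perm (Fin n) → Set (Fin n → ℝ) := fun σ => {u | Monotone (u ∘ σ)} with hA
  have hAmeas : ∀ σ, MeasurableSet (A σ) := by
    intro σ
    have : A σ = (fun u : Fin n → ℝ => u ∘ σ) ⁻¹' {u : Fin n → ℝ | Monotone u} := rfl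
    rw [this]
    exact (isClosed_mono.preimage (continuous_pi fun j => continuous_apply (σ j))).measurableSet
  have hmono_meas : MeasurableSet {u : Fin n → ℝ | Monotone u} := isClosed_mono.measurableSet
  -- each ordered region has the same integral
  have hstep : ∀ σ : Equiv.Perm (Fin n),
      ∫ u in A σ, φ u = ∫ u in {u : Fin n → ℝ | Monotone u}, φ u := by
    intro σ
    rw [← integral_indicator (hAmeas σ), ← integral_indicator hmono_meas]
    rw [← (mp_perm σ).integral_comp' (Set.indicator {u : Fin n → ℝ | Monotone u} φ)]
    refine integral_congr_ae (Filter.Eventually.of_forall fun u => ?_)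
    simp only [perm_apply]
    by_cases hu : u ∈ A σ
    · rw [Set.indicator_of_mem hu,
        Set.indicator_of_mem (show u ∘ σ ∈ {v : Fin n → ℝ | Monotone v} from hu), hsymm σ u]
    · rw [Set.indicator_of_notMem hu,
        Set.indicator_of_notMem (show u ∘ σ ∉ {v : Fin n → ℝ | Monotone v} from hu)]
  -- a.e. the indicator sum equals φ
  have hae : ∀ᵐ u : Fin n → ℝ,
      (∑ σ : Equiv.Perm (Fin n), Set.indicator (A σ) φ u) = φ u := by
    have hinj : ∀ᵐ u : Fin n → ℝ, Function.Injective u := by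
      rw [MeasureTheory.ae_iff]
      simpa using null_noninj
    filter_upwards [hinj] with u hu
    have hmem : u ∈ A (Tuple.sort u) := Tuple.monotone_sort u
    rw [Finset.sum_eq_single_of_mem (Tuple.sort u) (Finset.mem_univ _)]
    · exact Set.indicator_of_mem hmem φ
    · intro σ _ hσ
      apply Set.indicator_of_notMem
      intro hσmem
      apply hσ
      have huσ := Tuple.unique_monotone (f := u) hσmem hmem
      exact Equiv.ext fun j => hu (congrFun huσ j)
  have hsum : ∫ u, φ u = ∑ σ : Equiv.Perm (Fin n), ∫ u in A σ, φ u := by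
    calc ∫ u, φ u = ∫ u, ∑ σ : Equiv.Perm (Fin n), Set.indicator (A σ) φ u :=
          (integral_congr_ae hae).symm
      _ = ∑ σ : Equiv.Perm (Fin n), ∫ u, Set.indicator (A σ) φ u :=
          integral_finset_sum _ fun σ _ => hint.indicator (hAmeas σ)
      _ = ∑ σ : Equiv.Perm (Fin n), ∫ u in A σ, φ u := by
          refine Finset.sum_congr rfl fun σ _ => integral_indicator (hAmeas σ)
  rw [hsum]
  rw [Finset.sum_congr rfl fun σ _ => hstep σ, Finset.sum_const, Finset.card_univ, Fintype.card_perm]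
  simp [nsmul_eq_mul]

end OGAI

open OGAI

/-- Regularized ordered integral of `n` coinciding delta functions. -/
theorem ordered_gaussian_approx_identity (n : ℕ) (hn : 1 ≤ n) (f : (Fin n → ℝ) → ℝ)
    (hf : ContinuousOn f (Set.Icc 0 1)) (s₀ : ℝ) (hs₀ : s₀ ∈ Set.Ioo (0 : ℝ) 1) :
    Tendsto
      (fun ε : ℝ =>
        ∫ s in {s : Fin n → ℝ | s ∈ Set.Icc (0 : Fin n → ℝ) 1 ∧ Monotone s},
          (1 / (Real.sqrt Real.pi * ε)) ^ n * f s *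
            ∏ i, Real.exp (-(s i - s₀) ^ 2 / ε ^ 2))
      (nhdsWithin 0 (Set.Ioi 0))
      (nhds ((1 / n.factorial : ℝ) * f fun _ => s₀)) := by
  classical
  have hπ : (0:ℝ) < Real.sqrt Real.pi := Real.sqrt_pos.2 Real.pi_pos
  set s₀v : Fin n → ℝ := fun _ => s₀ with hs₀v
  set c : ℝ := (Real.sqrt Real.pi)⁻¹ ^ n with hc
  have hc0 : 0 ≤ c := pow_nonneg (inv_nonneg.2 hπ.le) n
  obtain ⟨M, hM⟩ : ∃ M, ∀ x ∈ Set.Icc (0 : Fin n → ℝ) 1, ‖f x‖ ≤ M :=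
    isCompact_Icc.exists_bound_of_continuousOn hf
  have h01 : (0 : Fin n → ℝ) ≤ 1 := fun i => zero_le_one
  have hM0 : 0 ≤ M := le_trans (norm_nonneg _) (hM 0 (Set.left_mem_Icc.2 h01))
  have hIcc_nhds : Set.Icc (0 : Fin n → ℝ) 1 ∈ nhds s₀v := by
    rw [← Set.pi_univ_Icc]
    exact set_pi_mem_nhds Set.finite_univ fun i _ => Icc_mem_nhds hs₀.1 hs₀.2
  have hs₀mem : s₀v ∈ Set.Icc (0 : Fin n → ℝ) 1 := mem_of_mem_nhds hIcc_nhds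
  set S : Set (Fin n → ℝ) := {s | s ∈ Set.Icc (0 : Fin n → ℝ) 1 ∧ Monotone s} with hS
  have hSmeas : MeasurableSet S := measurableSet_Icc.inter isClosed_mono.measurableSet
  set A : ℝ → Set (Fin n → ℝ) :=
    fun ε => {u | s₀v + ε • u ∈ Set.Icc (0 : Fin n → ℝ) 1 ∧ Monotone u} with hA
  have hcontaff : ∀ ε : ℝ, Continuous (fun u : Fin n → ℝ => s₀v + ε • u) :=
    fun ε => continuous_const.add (continuous_id.const_smul ε)
  have hAmeas : ∀ ε, MeasurableSet (A ε) := fun ε =>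
    ((isClosed_Icc.preimage (hcontaff ε)).measurableSet).inter isClosed_mono.measurableSet
  set ψ : ℝ → (Fin n → ℝ) → ℝ := fun ε u => c * f (s₀v + ε • u) * Phi u with hψ
  set h : ℝ → (Fin n → ℝ) → ℝ := fun ε => (A ε).indicator (ψ ε) with hh
  set h₀ : (Fin n → ℝ) → ℝ :=
    Set.indicator {u : Fin n → ℝ | Monotone u} (fun u => c * f s₀v * Phi u) with hh₀
  -- Step A : change of variables
  have key : ∀ ε : ℝ, ε ∈ Set.Ioi (0:ℝ) →
      (∫ s in S, (1 / (Real.sqrt Real.pi * ε)) ^ n * f s *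
          ∏ i, Real.exp (-(s i - s₀) ^ 2 / ε ^ 2))
        = ∫ u, h ε u := by
    intro ε hε
    rw [Set.mem_Ioi] at hε
    set F : (Fin n → ℝ) → ℝ := fun s =>
      (1 / (Real.sqrt Real.pi * ε)) ^ n * f s * ∏ i, Real.exp (-(s i - s₀) ^ 2 / ε ^ 2) with hF
    have hmono : ∀ u : Fin n → ℝ, Monotone (s₀v + ε • u) ↔ Monotone u := by
      intro u
      constructor
      · intro hm i j hij
        have h2 := hm hij
        simp only [Pi.add_apply, Pi.smul_apply, smul_eq_mul] at h2
        have : ε * u i ≤ ε * u j := by linarith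
        exact le_of_mul_le_mul_left this hε
      · intro hm i j hij
        simp only [Pi.add_apply, Pi.smul_apply, smul_eq_mul]
        have : ε * u i ≤ ε * u j := mul_le_mul_of_nonneg_left (hm hij) hε.le
        linarith
    have hpt : ∀ u : Fin n → ℝ, ε ^ n • Set.indicator S F (s₀v + ε • u) = h ε u := by
      intro u
      by_cases hu : u ∈ A ε
      · have hmem : s₀v + ε • u ∈ S := ⟨hu.1, (hmono u).2 hu.2⟩
        show ε ^ n • Set.indicator S F (s₀v + ε • u) = (A ε).indicator (ψ ε) u
        rw [Set.indicator_of_mem hmem, Set.indicator_of_mem hu]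
        show ε ^ n • ((1 / (Real.sqrt Real.pi * ε)) ^ n * f (s₀v + ε • u) *
          ∏ i, Real.exp (-((s₀v + ε • u) i - s₀) ^ 2 / ε ^ 2)) = c * f (s₀v + ε • u) * Phi u
        have hval : ∀ i : Fin n, -((s₀v + ε • u) i - s₀) ^ 2 / ε ^ 2 = -(u i) ^ 2 := by
          intro i
          simp only [Pi.add_apply, Pi.smul_apply, smul_eq_mul]
          field_simp
          ring
        simp only [hval]
        have hcoef : ε ^ n * (1 / (Real.sqrt Real.pi * ε)) ^ n = c := by
          rw [hc, ← mul_pow]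
          congr 1
          field_simp
        rw [smul_eq_mul]
        calc ε ^ n * ((1 / (Real.sqrt Real.pi * ε)) ^ n * f (s₀v + ε • u) *
              ∏ i, Real.exp (-(u i) ^ 2))
            = (ε ^ n * (1 / (Real.sqrt Real.pi * ε)) ^ n) * f (s₀v + ε • u) *
              ∏ i, Real.exp (-(u i) ^ 2) := by ring
          _ = c * f (s₀v + ε • u) * Phi u := by rw [hcoef]; rfl
      · have hmem : s₀v + ε • u ∉ S := by
          intro hmem
          exact hu ⟨hmem.1, (hmono u).1 hmem.2⟩
        show ε ^ n • Set.indicator S F (s₀v + ε • u) = (A ε).indicator (ψ ε) u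
        rw [Set.indicator_of_notMem hmem, Set.indicator_of_notMem hu, smul_zero]
    calc ∫ s in S, F s = ∫ s, Set.indicator S F s := (integral_indicator hSmeas).symm
      _ = ∫ x, Set.indicator S F (s₀v + x) := (integral_add_left_eq_self _ s₀v).symm
      _ = ε ^ n • ∫ u, Set.indicator S F (s₀v + ε • u) := by
          rw [Measure.integral_comp_smul volume (fun x => Set.indicator S F (s₀v + x)) ε,
            Module.finrank_fin_fun, smul_smul,
            abs_of_nonneg (inv_nonneg.2 (pow_nonneg hε.le n)),
            mul_inv_cancel₀ (pow_ne_zero n hε.ne'), one_smul]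
      _ = ∫ u, ε ^ n • Set.indicator S F (s₀v + ε • u) := (integral_smul _ _).symm
      _ = ∫ u, h ε u := integral_congr_ae (Filter.Eventually.of_forall hpt)
  -- Step B : dominated convergence
  have hbound_int : Integrable (fun u : Fin n → ℝ => c * M * Phi u) :=
    Phi_integrable.const_mul _
  have hmeas : ∀ᶠ ε in nhdsWithin (0:ℝ) (Set.Ioi 0), AEStronglyMeasurable (h ε) volume := by
    filter_upwards [self_mem_nhdsWithin] with ε hε
    refine (aestronglyMeasurable_indicator_iff (hAmeas ε)).2
      (ContinuousOn.aestronglyMeasurable ?_ (hAmeas ε))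
    refine ContinuousOn.mul (ContinuousOn.mul continuousOn_const ?_) Phi_cont.continuousOn
    exact hf.comp (hcontaff ε).continuousOn fun u hu => hu.1
  have hbound : ∀ᶠ ε in nhdsWithin (0:ℝ) (Set.Ioi 0),
      ∀ᵐ u : Fin n → ℝ, ‖h ε u‖ ≤ c * M * Phi u := by
    refine Filter.Eventually.of_forall fun ε => Filter.Eventually.of_forall fun u => ?_
    by_cases hu : u ∈ A ε
    · have heq : h ε u = c * f (s₀v + ε • u) * Phi u := Set.indicator_of_mem hu _
      rw [heq]
      rw [Real.norm_eq_abs, abs_mul, abs_mul, abs_of_nonneg hc0, abs_of_nonneg (Phi_nonneg u)]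
      have h1 : |f (s₀v + ε • u)| ≤ M := hM _ hu.1
      have h2 : c * |f (s₀v + ε • u)| ≤ c * M := mul_le_mul_of_nonneg_left h1 hc0
      exact mul_le_mul_of_nonneg_right h2 (Phi_nonneg u)
    · have heq : h ε u = 0 := Set.indicator_of_notMem hu _
      rw [heq]
      simp only [norm_zero]
      exact mul_nonneg (mul_nonneg hc0 hM0) (Phi_nonneg u)
  have hlim : ∀ᵐ u : Fin n → ℝ, Tendsto (fun ε => h ε u) (nhdsWithin (0:ℝ) (Set.Ioi 0))
      (nhds (h₀ u)) := by
    refine Filter.Eventually.of_forall fun u => ?_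
    by_cases hu : Monotone u
    · have hval : h₀ u = c * f s₀v * Phi u := Set.indicator_of_mem hu _
      rw [hval]
      have htend_aff : Tendsto (fun ε : ℝ => s₀v + ε • u) (nhds 0) (nhds s₀v) := by
        have : Continuous (fun ε : ℝ => s₀v + ε • u) :=
          continuous_const.add (continuous_id.smul continuous_const)
        have h0 : (fun ε : ℝ => s₀v + ε • u) 0 = s₀v := by simp
        simpa [h0] using this.tendsto 0
      have htendf : Tendsto (fun ε : ℝ => f (s₀v + ε • u)) (nhds 0) (nhds (f s₀v)) :=
        Filter.Tendsto.comp (hf.continuousAt hIcc_nhds) htend_aff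
      have htendψ : Tendsto (fun ε : ℝ => ψ ε u) (nhdsWithin (0:ℝ) (Set.Ioi 0))
          (nhds (c * f s₀v * Phi u)) := by
        have := ((htendf.const_mul c).mul_const (Phi u)).mono_left
          (nhdsWithin_le_nhds (s := Set.Ioi (0:ℝ)))
        exact this
      refine htendψ.congr' ?_
      have hev : ∀ᶠ ε in nhdsWithin (0:ℝ) (Set.Ioi 0), s₀v + ε • u ∈ Set.Icc (0:Fin n → ℝ) 1 :=
        (htend_aff.eventually hIcc_nhds).filter_mono nhdsWithin_le_nhds
      filter_upwards [hev] with ε hε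
      exact (Set.indicator_of_mem (show u ∈ A ε from ⟨hε, hu⟩) (ψ ε)).symm
    · have hval : h₀ u = 0 := Set.indicator_of_notMem hu _
      rw [hval]
      have : ∀ ε : ℝ, h ε u = 0 := by
        intro ε
        exact Set.indicator_of_notMem (fun hmem => hu hmem.2) _
      simpa [this] using tendsto_const_nhds
  have main := MeasureTheory.tendsto_integral_filter_of_dominated_convergence
    (μ := (volume : Measure (Fin n → ℝ))) (F := h) (f := h₀)
    (bound := fun u => c * M * Phi u) hmeas hbound hbound_int hlim
  -- Step C : value of the limit integral
  have hI : ∫ u, h₀ u = (1 / n.factorial : ℝ) * f s₀v := by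
    rw [hh₀, integral_indicator isClosed_mono.measurableSet, integral_const_mul]
    have hMono := integral_monotone_eq (n := n) Phi Phi_integrable Phi_symm
    rw [Phi_integral] at hMono
    have hfact : (n.factorial : ℝ) ≠ 0 := Nat.cast_ne_zero.2 n.factorial_ne_zero
    have hJ : ∫ u in {u : Fin n → ℝ | Monotone u}, Phi u
        = (Real.sqrt Real.pi) ^ n / n.factorial := by
      field_simp at hMono ⊢
      linarith [hMono]
    rw [hJ, hc]
    field_simp
    rw [mul_right_comm, ← mul_pow, one_div_mul_cancel hπ.ne', one_pow, one_mul]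
  rw [hI] at main
  refine main.congr' ?_
  filter_upwards [self_mem_nhdsWithin] with ε hε
  exact (key ε hε).symm
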